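/- Incompleteness witness: for every natural number k there is a model m over two propositional atoms p, q satisfying all judgements (n+1)p ⊢ n·q for 0 ≤ n ≤ k but not satisfying p ⊢ q; namely m(p) = k/(k+1), m(q) = 1 works: (n+1)·(k/(k+1)) ≥ n·1 for all n ≤ k, yet k/(k+1) < 1. -/
import Mathlib

/-- Incompleteness witness: for every `k`, the model `m(p) = k/(k+1)`,
`m(q) = 1` satisfies `(n+1)p ⊢ n·q` for all `n ≤ k` but not `p ⊢ q`. -/
theorem incompleteness_witness (k : ℕ) :
    (∀ n : ℕ, n ≤ k → ((n : ℝ) + 1) * ((k : ℝ) / ((k : ℝ) + 1)) ≥ (n : ℝ)) ∧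
    (k : ℝ) / ((k : ℝ) + 1) < 1 := by
  have hk : (0:ℝ) < (k:ℝ) + 1 := by positivity
  constructor
  · intro n hn
    have hn' : (n:ℝ) ≤ (k:ℝ) := by exact_mod_cast hn
    rw [ge_iff_le, div_eq_mul_inv, ← mul_assoc, ← div_eq_mul_inv, le_div_iff₀ hk]
    nlinarith
  · rw [div_lt_one hk]; linarith
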